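/- arXiv:1302.5197 — 7 statements merged into one kernel-verified Lean document; each statement's English description precedes it below -/
import Mathlib

section
/- Let G be a finite simple graph on vertex set V, let Δ be the clique complex of G (the simplicial complex whose faces are the nonempty cliques of G), let {a,b} be an edge of G, and let v ∉ V. Let G' be the graph obtained from G by deleting the edge {a,b}, adding the new vertex v, and joining v to a, to b, and to every common neighbor of a and b in G. Then the clique complex of G' equals the stellar subdivision of Δ at {a,b} with new vertex v. -/
/-- A finite simplicial complex on a finite vertex set `V`: a collection of nonempty
subsets of `V` (faces), closed under taking nonempty subsets, containing all singletons. -/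
structure SC (α : Type*) where
  V : Finset α
  faces : Set (Finset α)
  nonempty_mem : ∀ F ∈ faces, F.Nonempty
  subset_V : ∀ F ∈ faces, F ⊆ V
  down_closed : ∀ F ∈ faces, ∀ T ⊆ F, T.Nonempty → T ∈ faces
  singleton_mem : ∀ x ∈ V, ({x} : Finset α) ∈ faces

/-- The link of a face `F` in a collection of faces `K`. -/
def lkS {α : Type*} [DecidableEq α] (K : Set (Finset α)) (F : Finset α) : Set (Finset α) :=
  {T | T.Nonempty ∧ T ∩ F = ∅ ∧ T ∪ F ∈ K}

/-- The faces of the stellar subdivision of `K` at `F` with new vertex `v`. -/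
def stellarS {α : Type*} [DecidableEq α] (K : Set (Finset α)) (F : Finset α) (v : α) :
    Set (Finset α) :=
  {T ∈ K | ¬ F ⊆ T} ∪
  {U | ∃ S T : Finset α, S ⊂ F ∧ (T ∈ lkS K F ∨ T = ∅) ∧ U = insert v (S ∪ T)}

/-- `Γ` is the stellar subdivision of the simplicial complex `Δ` at the face `F`
(of size at least 2) with new vertex `v ∉ Δ.V`. -/
def IsStellar {α : Type*} [DecidableEq α] (Δ Γ : SC α) (F : Finset α) (v : α) : Prop :=
  F ∈ Δ.faces ∧ 2 ≤ F.card ∧ v ∉ Δ.V ∧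
  Γ.V = insert v Δ.V ∧ Γ.faces = stellarS Δ.faces F v

/-- `Γ` is an edge subdivision of `Δ`: a stellar subdivision at a face of size 2. -/
def IsEdgeSubdivOf {α : Type*} [DecidableEq α] (Δ Γ : SC α) : Prop :=
  ∃ (e : Finset α) (v : α), e.card = 2 ∧ IsStellar Δ Γ e v

/-- `F` is a missing face of the collection of faces `K`: it has size at least 2, it is
not a face, and all its proper nonempty subsets are faces. -/
def Missing {α : Type*} (K : Set (Finset α)) (F : Finset α) : Prop :=
  2 ≤ F.card ∧ F ∉ K ∧ ∀ T ⊂ F, T.Nonempty → T ∈ K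

/-- A simplicial complex is flag if all its missing faces have size two. -/
def IsFlag {α : Type*} (Δ : SC α) : Prop := ∀ F, Missing Δ.faces F → F.card = 2

/-- The pair (faces `K`, vertex set `V`) is isomorphic to the pair (faces `L`, vertex
set `W`): some bijection of the vertex sets maps the faces exactly onto the faces. -/
def IsomS {α β : Type*} [DecidableEq α] [DecidableEq β] (K : Set (Finset α)) (V : Set α)
    (L : Set (Finset β)) (W : Set β) : Prop :=
  ∃ f : α → β, Set.BijOn f V W ∧
    ∀ T : Finset α, ↑T ⊆ V → (T ∈ K ↔ T.image f ∈ L)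

/-- Two simplicial complexes are isomorphic. -/
def Isom {α β : Type*} [DecidableEq α] [DecidableEq β] (Δ : SC α) (Γ : SC β) : Prop :=
  IsomS Δ.faces ↑Δ.V Γ.faces ↑Γ.V

/-- One of `X`, `Y` is isomorphic to a stellar subdivision of the other. -/
def StellarIsoStep {α : Type*} [DecidableEq α] (X Y : SC α) : Prop :=
  (∃ (Z : SC α) (F : Finset α) (w : α), IsStellar X Z F w ∧ Isom Z Y) ∨
  (∃ (Z : SC α) (F : Finset α) (w : α), IsStellar Y Z F w ∧ Isom Z X)

/-- One of `X`, `Y` is isomorphic to an edge subdivision of the other. -/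
def EdgeIsoStep {α : Type*} [DecidableEq α] (X Y : SC α) : Prop :=
  (∃ Z : SC α, IsEdgeSubdivOf X Z ∧ Isom Z Y) ∨
  (∃ Z : SC α, IsEdgeSubdivOf Y Z ∧ Isom Z X)

/-- The clique complex of a graph `G` on the vertex set `V`: faces are the nonempty
subsets of `V` whose vertices are pairwise adjacent (singletons included). -/
def cliqueFaces {α : Type*} (G : SimpleGraph α) (V : Finset α) : Set (Finset α) :=
  {T | T.Nonempty ∧ T ⊆ V ∧ ∀ x ∈ T, ∀ y ∈ T, x ≠ y → G.Adj x y}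

/-- If `G'` is obtained from the graph `G` (on vertex set `V`) by deleting
the edge `{a,b}`, adding a new vertex `v ∉ V` and joining `v` to `a`, to `b`, and to
every common neighbor of `a` and `b`, then the clique complex of `G'` equals the stellar
subdivision of the clique complex of `G` at `{a,b}` with new vertex `v`. -/
theorem clique_complex_of_edge_subdivided_graph {α : Type*} [DecidableEq α]
    (G : SimpleGraph α) (V : Finset α) (hG : ∀ x y, G.Adj x y → x ∈ V ∧ y ∈ V)
    (a b : α) (hab : G.Adj a b) (v : α) (hv : v ∉ V)
    (G' : SimpleGraph α)
    (hG' : ∀ x y, G'.Adj x y ↔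
      ((G.Adj x y ∧ ¬(x = a ∧ y = b) ∧ ¬(x = b ∧ y = a)) ∨
       (x = v ∧ (y = a ∨ y = b ∨ (G.Adj a y ∧ G.Adj b y))) ∨
       (y = v ∧ (x = a ∨ x = b ∨ (G.Adj a x ∧ G.Adj b x))))) :
    cliqueFaces G' (insert v V) = stellarS (cliqueFaces G V) {a, b} v := by
  obtain ⟨ha, hb⟩ := hG a b hab
  have hne : a ≠ b := hab.ne
  have hva : v ≠ a := fun h => hv (h ▸ ha)
  have hvb : v ≠ b := fun h => hv (h ▸ hb)
  have habV : ({a, b} : Finset α) ⊆ V :=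
    Finset.insert_subset ha (Finset.singleton_subset_iff.2 hb)
  have hGG : ∀ x y, x ≠ v → y ≠ v → G'.Adj x y →
      G.Adj x y ∧ ¬(x = a ∧ y = b) ∧ ¬(x = b ∧ y = a) := by
    intro x y hx hy h
    rcases (hG' x y).1 h with h' | ⟨h', _⟩ | ⟨h', _⟩
    · exact h'
    · exact absurd h' hx
    · exact absurd h' hy
  have hGv : ∀ x, x ≠ v → G'.Adj v x → x = a ∨ x = b ∨ (G.Adj a x ∧ G.Adj b x) := by
    intro x hx h
    rcases (hG' v x).1 h with h' | ⟨_, h'⟩ | ⟨h', _⟩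
    · exact absurd (hG v x h'.1).1 hv
    · exact h'
    · exact absurd h' hx
  have hG'v : ∀ x, (x = a ∨ x = b ∨ (G.Adj a x ∧ G.Adj b x)) → G'.Adj v x :=
    fun x hx => (hG' v x).2 (Or.inr (Or.inl ⟨rfl, hx⟩))
  have hG'G : ∀ x y, G.Adj x y → ¬(x = a ∧ y = b) → ¬(x = b ∧ y = a) → G'.Adj x y :=
    fun x y h h1 h2 => (hG' x y).2 (Or.inl ⟨h, h1, h2⟩)
  have hG'ab : ¬ G'.Adj a b := by
    intro h
    rcases (hG' a b).1 h with ⟨_, h1, _⟩ | ⟨h1, _⟩ | ⟨h1, _⟩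
    · exact h1 ⟨rfl, rfl⟩
    · exact hva h1.symm
    · exact hvb h1.symm
  ext U
  simp only [cliqueFaces, stellarS, lkS, Set.mem_setOf_eq, Set.mem_union, Set.mem_sep_iff]
  constructor
  · rintro ⟨hUne, hUsub, hUcl⟩
    by_cases hvU : v ∈ U
    · right
      have hnotboth : ¬ (a ∈ U ∧ b ∈ U) := by
        rintro ⟨haU, hbU⟩
        exact hG'ab (hUcl a haU b hbU hne)
      have hadjv : ∀ x ∈ U, x ≠ v → x = a ∨ x = b ∨ (G.Adj a x ∧ G.Adj b x) := by
        intro x hx hxv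
        exact hGv x hxv (hUcl v hvU x hx (Ne.symm hxv))
      have hUV : ∀ x ∈ U, x ≠ v → x ∈ V := by
        intro x hx hxv
        rcases Finset.mem_insert.1 (hUsub hx) with h | h
        · exact absurd h hxv
        · exact h
      refine ⟨U ∩ {a, b}, U \ {v, a, b}, ?_, ?_, ?_⟩
      · refine ⟨Finset.inter_subset_right, fun hsub => ?_⟩
        exact hnotboth ⟨Finset.mem_of_mem_inter_left (hsub (by simp)),
          Finset.mem_of_mem_inter_left (hsub (by simp [hne]))⟩
      · by_cases hT0 : (U \ {v, a, b}).Nonempty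
        · left
          refine ⟨hT0, ?_, ?_, ?_, ?_⟩
          · ext w
            simp only [Finset.mem_inter, Finset.mem_sdiff, Finset.mem_insert,
              Finset.mem_singleton, Finset.notMem_empty, iff_false]
            rintro ⟨⟨_, hw⟩, h | h⟩ <;> exact hw (by simp [h])
          · exact Finset.Nonempty.inr (by simp)
          · refine Finset.union_subset ?_ habV
            intro w hw
            simp only [Finset.mem_sdiff, Finset.mem_insert, Finset.mem_singleton] at hw
            exact hUV w hw.1 (fun h => hw.2 (Or.inl h))
          · intro x hx y hy hxy
            simp only [Finset.mem_union, Finset.mem_sdiff, Finset.mem_insert,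
              Finset.mem_singleton] at hx hy
            rcases hx with ⟨hxU, hxn⟩ | hx
            · push_neg at hxn
              rcases hy with ⟨hyU, hyn⟩ | hy
              · push_neg at hyn
                exact (hGG x y hxn.1 hyn.1 (hUcl x hxU y hyU hxy)).1
              · rcases hadjv x hxU hxn.1 with h | h | h
                · exact absurd h hxn.2.1
                · exact absurd h hxn.2.2
                · rcases hy with rfl | rfl
                  · exact h.1.symm
                  · exact h.2.symm
            · rcases hy with ⟨hyU, hyn⟩ | hy
              · push_neg at hyn
                rcases hadjv y hyU hyn.1 with h | h | h
                · exact absurd h hyn.2.1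
                · exact absurd h hyn.2.2
                · rcases hx with rfl | rfl
                  · exact h.1
                  · exact h.2
              · rcases hx with rfl | rfl <;> rcases hy with rfl | rfl
                · exact absurd rfl hxy
                · exact hab
                · exact hab.symm
                · exact absurd rfl hxy
        · right
          rw [Finset.not_nonempty_iff_eq_empty] at hT0
          exact hT0
      · ext w
        simp only [Finset.mem_insert, Finset.mem_union, Finset.mem_inter,
          Finset.mem_sdiff, Finset.mem_singleton]
        by_cases hw : w = v
        · subst hw; simp [hvU]
        · constructor
          · intro hwU
            by_cases hwab : w = a ∨ w = b
            · exact Or.inr (Or.inl ⟨hwU, hwab⟩)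
            · push_neg at hwab
              exact Or.inr (Or.inr ⟨hwU, by push_neg; exact ⟨hw, hwab.1, hwab.2⟩⟩)
          · rintro (h | ⟨h, _⟩ | ⟨h, _⟩)
            · exact absurd h hw
            · exact h
            · exact h
    · left
      have hUV : U ⊆ V := by
        intro x hx
        rcases Finset.mem_insert.1 (hUsub hx) with h | h
        · exact absurd (h ▸ hx) hvU
        · exact h
      refine ⟨⟨hUne, hUV, ?_⟩, ?_⟩
      · intro x hx y hy hxy
        exact (hGG x y (fun h => hvU (h ▸ hx)) (fun h => hvU (h ▸ hy))
          (hUcl x hx y hy hxy)).1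
      · intro hsub
        exact hG'ab (hUcl a (hsub (by simp)) b (hsub (by simp [hne])) hne)
  · rintro (⟨⟨hne', hsub, hcl⟩, hnab⟩ | ⟨S, T, hS, hT, rfl⟩)
    · refine ⟨hne', hsub.trans (Finset.subset_insert v V), ?_⟩
      intro x hx y hy hxy
      refine hG'G x y (hcl x hx y hy hxy) ?_ ?_
      · rintro ⟨rfl, rfl⟩
        exact hnab (Finset.insert_subset hx (Finset.singleton_subset_iff.2 hy))
      · rintro ⟨rfl, rfl⟩
        exact hnab (Finset.insert_subset hy (Finset.singleton_subset_iff.2 hx))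
    · have hSab : S ⊆ {a, b} := hS.subset
      have key : T ∩ ({a, b} : Finset α) = ∅ ∧ T ∪ {a, b} ⊆ V ∧
          ∀ x ∈ T ∪ ({a, b} : Finset α), ∀ y ∈ T ∪ ({a, b} : Finset α),
            x ≠ y → G.Adj x y := by
        rcases hT with ⟨_, h1, _, h2, h3⟩ | rfl
        · exact ⟨h1, h2, h3⟩
        · refine ⟨by simp, by simpa using habV, ?_⟩
          intro x hx y hy hxy
          simp only [Finset.empty_union, Finset.mem_insert, Finset.mem_singleton] at hx hy
          rcases hx with rfl | rfl <;> rcases hy with rfl | rfl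
          · exact absurd rfl hxy
          · exact hab
          · exact hab.symm
          · exact absurd rfl hxy
      obtain ⟨hTab, hTabV, hTabcl⟩ := key
      have haT : a ∉ T := by
        intro h
        have : a ∈ T ∩ ({a, b} : Finset α) := Finset.mem_inter.2 ⟨h, by simp⟩
        rw [hTab] at this
        exact Finset.notMem_empty a this
      have hbT : b ∉ T := by
        intro h
        have : b ∈ T ∩ ({a, b} : Finset α) := Finset.mem_inter.2 ⟨h, by simp⟩
        rw [hTab] at this
        exact Finset.notMem_empty b this
      have hSTV : S ∪ T ⊆ V :=
        Finset.union_subset (hSab.trans habV)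
          ((Finset.subset_union_left).trans hTabV)
      have hSTv : v ∉ S ∪ T := fun h => hv (hSTV h)
      have hnotboth : ¬ (a ∈ S ∪ T ∧ b ∈ S ∪ T) := by
        rintro ⟨hA, hB⟩
        have hAS : a ∈ S := by
          rcases Finset.mem_union.1 hA with h | h
          · exact h
          · exact absurd h haT
        have hBS : b ∈ S := by
          rcases Finset.mem_union.1 hB with h | h
          · exact h
          · exact absurd h hbT
        exact hS.2 (Finset.insert_subset hAS (Finset.singleton_subset_iff.2 hBS))
      have hmem : ∀ w ∈ S ∪ T, w ∈ T ∪ ({a, b} : Finset α) := by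
        intro w hw
        rcases Finset.mem_union.1 hw with h | h
        · exact Finset.mem_union.2 (Or.inr (hSab h))
        · exact Finset.mem_union.2 (Or.inl h)
      have hadjv : ∀ w ∈ S ∪ T, G'.Adj v w := by
        intro w hw
        rcases Finset.mem_union.1 hw with h | h
        · rcases Finset.mem_insert.1 (hSab h) with rfl | h'
          · exact hG'v w (Or.inl rfl)
          · exact hG'v w (Or.inr (Or.inl (Finset.mem_singleton.1 h')))
        · refine hG'v w (Or.inr (Or.inr ⟨?_, ?_⟩))
          · exact hTabcl a (by simp) w (Finset.mem_union.2 (Or.inl h))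
              (fun hh => haT (hh ▸ h))
          · exact hTabcl b (by simp) w (Finset.mem_union.2 (Or.inl h))
              (fun hh => hbT (hh ▸ h))
      refine ⟨Finset.insert_nonempty _ _, ?_, ?_⟩
      · exact Finset.insert_subset_insert v hSTV
      · intro x hx y hy hxy
        rcases Finset.mem_insert.1 hx with rfl | hxST
        · rcases Finset.mem_insert.1 hy with rfl | hyST
          · exact absurd rfl hxy
          · exact hadjv y hyST
        · rcases Finset.mem_insert.1 hy with rfl | hyST
          · exact (hadjv x hxST).symm
          · refine hG'G x y
              (hTabcl x (hmem x hxST) y (hmem y hyST) hxy) ?_ ?_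
            · rintro ⟨rfl, rfl⟩
              exact hnotboth ⟨hxST, hyST⟩
            · rintro ⟨rfl, rfl⟩
              exact hnotboth ⟨hyST, hxST⟩
end

section
/- Let A and B be finite simplicial complexes on disjoint vertex sets, let σ ∈ A be a face with |σ| ≥ 2, and let v be a new vertex not in either vertex set. Then the stellar subdivision of the join A * B at σ with new vertex v equals the join of the stellar subdivision of A at σ (with new vertex v) with B; that is, stellar_{A*B}(σ) = stellar_A(σ) * B. -/
/-- The faces of the join of two collections of faces. -/
def joinFaces {α : Type*} [DecidableEq α] (K L : Set (Finset α)) : Set (Finset α) :=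
  K ∪ L ∪ {U | ∃ S ∈ K, ∃ T ∈ L, U = S ∪ T}

/-- Stellar subdivision and join commute: for complexes `A`, `B` on
disjoint vertex sets, a face `σ ∈ A` with `|σ| ≥ 2`, and a new vertex `v`,
`stellar_{A*B}(σ) = stellar_A(σ) * B`. -/
theorem stellar_join_comm {α : Type*} [DecidableEq α]
    (A B : SC α) (hdisj : Disjoint A.V B.V)
    (σ : Finset α) (hσ : σ ∈ A.faces) (hcard : 2 ≤ σ.card)
    (v : α) (hvA : v ∉ A.V) (hvB : v ∉ B.V) :
    stellarS (joinFaces A.faces B.faces) σ v = joinFaces (stellarS A.faces σ v) B.faces := by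
  have hσne : σ.Nonempty := Finset.card_pos.mp (by omega)
  have hdisj' : ∀ x, x ∈ A.V → x ∉ B.V := fun x hx => Finset.disjoint_left.mp hdisj hx
  have hσB : ∀ x ∈ σ, x ∉ B.V := fun x hx => hdisj' x (A.subset_V σ hσ hx)
  have key : ∀ S T : Finset α, T ⊆ B.V → σ ⊆ S ∪ T → σ ⊆ S := by
    intro S T hT hsub x hx
    rcases Finset.mem_union.mp (hsub hx) with h | h
    · exact h
    · exact absurd (hT h) (hσB x hx)
  ext U
  simp only [stellarS, joinFaces, lkS, Set.mem_union, Set.mem_setOf_eq, Set.mem_sep_iff]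
  constructor
  · rintro (⟨hUJ, hnσU⟩ | ⟨S, T, hSσ, hT, rfl⟩)
    · rcases hUJ with (hUK | hUL) | ⟨S, hS, T, hT, rfl⟩
      · exact Or.inl (Or.inl (Or.inl ⟨hUK, hnσU⟩))
      · exact Or.inl (Or.inr hUL)
      · exact Or.inr ⟨S, Or.inl ⟨hS, fun h => hnσU (h.trans Finset.subset_union_left)⟩,
          T, hT, rfl⟩
    · rcases hT with ⟨hTne, hTσ, hTJ⟩ | rfl
      · rcases hTJ with (hK | hL) | ⟨S', hS', T', hT', hEq⟩
        · exact Or.inl (Or.inl (Or.inr ⟨S, T, hSσ, Or.inl ⟨hTne, hTσ, hK⟩, rfl⟩))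
        · obtain ⟨x, hx⟩ := hσne
          exact absurd (B.subset_V _ hL (Finset.mem_union_right _ hx)) (hσB x hx)
        · have hT'B : T' ⊆ B.V := B.subset_V _ hT'
          have hS'A : S' ⊆ A.V := A.subset_V _ hS'
          have hσT' : ∀ x ∈ σ, x ∉ T' := fun x hx h => hσB x hx (hT'B h)
          have hS'T' : ∀ x ∈ S', x ∉ T' := fun x hx h => hdisj' x (hS'A hx) (hT'B h)
          have hTσ' : ∀ x ∈ T, x ∉ σ := by
            intro x hx h
            have : x ∈ T ∩ σ := Finset.mem_inter.mpr ⟨hx, h⟩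
            simp [hTσ] at this
          have hT'T : T' ⊆ T := by
            intro x hx
            have hx2 : x ∈ T ∪ σ := hEq ▸ Finset.mem_union_right _ hx
            rcases Finset.mem_union.mp hx2 with h | h
            · exact h
            · exact absurd hx (hσT' x h)
          have hTaσ : (T \ T') ∪ σ = S' := by
            ext x
            simp only [Finset.mem_union, Finset.mem_sdiff]
            constructor
            · rintro (⟨hxT, hxT'⟩ | hxσ)
              · have hx2 : x ∈ S' ∪ T' := hEq ▸ Finset.mem_union_left _ hxT
                rcases Finset.mem_union.mp hx2 with h | h
                · exact h
                · exact absurd h hxT'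
              · have hx2 : x ∈ S' ∪ T' := hEq ▸ Finset.mem_union_right _ hxσ
                rcases Finset.mem_union.mp hx2 with h | h
                · exact h
                · exact absurd h (hσT' x hxσ)
            · intro hxS'
              have hx2 : x ∈ T ∪ σ := by rw [hEq]; exact Finset.mem_union_left _ hxS'
              rcases Finset.mem_union.mp hx2 with h | h
              · exact Or.inl ⟨h, hS'T' x hxS'⟩
              · exact Or.inr h
          have hT'ne : T'.Nonempty := B.nonempty_mem _ hT'
          by_cases hTa : (T \ T').Nonempty
          · have hTalk : (T \ T') ∩ σ = ∅ := by
              ext x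
              simp only [Finset.mem_inter, Finset.mem_sdiff, Finset.notMem_empty, iff_false]
              rintro ⟨⟨hxT, _⟩, hxσ⟩
              exact hTσ' x hxT hxσ
            refine Or.inr ⟨insert v (S ∪ (T \ T')),
              Or.inr ⟨S, T \ T', hSσ, Or.inl ⟨hTa, hTalk, by rw [hTaσ]; exact hS'⟩, rfl⟩,
              T', hT', ?_⟩
            ext x
            simp only [Finset.mem_insert, Finset.mem_union, Finset.mem_sdiff]
            by_cases hx : x ∈ T'
            · have := hT'T hx; tauto
            · tauto
          · have hTT' : T = T' := by
              apply Finset.Subset.antisymm _ hT'T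
              intro x hx
              by_contra hxn
              exact hTa ⟨x, Finset.mem_sdiff.mpr ⟨hx, hxn⟩⟩
            refine Or.inr ⟨insert v (S ∪ ∅),
              Or.inr ⟨S, ∅, hSσ, Or.inr rfl, rfl⟩, T', hT', ?_⟩
            subst hTT'
            ext x
            simp only [Finset.mem_insert, Finset.mem_union, Finset.union_empty,
              Finset.notMem_empty]
            tauto
      · exact Or.inl (Or.inl (Or.inr ⟨S, ∅, hSσ, Or.inr rfl, rfl⟩))
  · rintro ((hSt | hUL) | ⟨S₀, hS₀, T₀, hT₀, rfl⟩)
    · rcases hSt with ⟨hUK, hn⟩ | ⟨S, T, hSσ, hT, rfl⟩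
      · exact Or.inl ⟨Or.inl (Or.inl hUK), hn⟩
      · refine Or.inr ⟨S, T, hSσ, ?_, rfl⟩
        rcases hT with ⟨hne, hd, hm⟩ | rfl
        · exact Or.inl ⟨hne, hd, Or.inl (Or.inl hm)⟩
        · exact Or.inr rfl
    · refine Or.inl ⟨Or.inl (Or.inr hUL), ?_⟩
      intro h
      obtain ⟨x, hx⟩ := hσne
      exact hσB x hx (B.subset_V _ hUL (h hx))
    · have hT₀B : T₀ ⊆ B.V := B.subset_V _ hT₀
      have hT₀ne : T₀.Nonempty := B.nonempty_mem _ hT₀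
      have hT₀σ : ∀ x ∈ T₀, x ∉ σ := fun x hx h => hσB x h (hT₀B hx)
      rcases hS₀ with ⟨hS₀K, hn⟩ | ⟨S, T, hSσ, hT, rfl⟩
      · exact Or.inl ⟨Or.inr ⟨S₀, hS₀K, T₀, hT₀, rfl⟩,
          fun h => hn (key S₀ T₀ hT₀B h)⟩
      · have hTσ : ∀ x ∈ T, x ∉ σ := by
          rcases hT with ⟨_, hd, _⟩ | rfl
          · intro x hx h
            have : x ∈ T ∩ σ := Finset.mem_inter.mpr ⟨hx, h⟩
            simp [hd] at this
          · simp
        refine Or.inr ⟨S, T ∪ T₀, hSσ, Or.inl ⟨?_, ?_, ?_⟩, ?_⟩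
        · obtain ⟨x, hx⟩ := hT₀ne
          exact ⟨x, Finset.mem_union_right _ hx⟩
        · ext x
          simp only [Finset.mem_inter, Finset.mem_union, Finset.notMem_empty, iff_false]
          rintro ⟨hx1 | hx1, hx2⟩
          · exact hTσ x hx1 hx2
          · exact hT₀σ x hx1 hx2
        · rcases hT with ⟨_, _, hm⟩ | rfl
          · refine Or.inr ⟨T ∪ σ, hm, T₀, hT₀, ?_⟩
            ext x
            simp only [Finset.mem_union]
            tauto
          · refine Or.inr ⟨σ, hσ, T₀, hT₀, ?_⟩
            ext x
            simp only [Finset.mem_union, Finset.notMem_empty]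
            tauto
        · ext x
          simp only [Finset.mem_insert, Finset.mem_union]
          tauto
end

section
/- Let K be a finite simplicial complex on vertex set V, F ∈ K a face with |F| ≥ 2, v ∉ V a new vertex, Γ = stellar_K(F) the stellar subdivision of K at F with new vertex v, and W ⊆ V. If F ⊄ W, then the induced subcomplex Γ[W] equals K[W]. If F ⊆ W, then the induced subcomplex Γ[W ∪ {v}] equals the stellar subdivision of K[W] at F with new vertex v. -/
/-- The induced subcomplex of a collection of faces `K` on a vertex set `W`. -/
def restrS {α : Type*} (K : Set (Finset α)) (W : Finset α) : Set (Finset α) :=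
  {T ∈ K | T ⊆ W}

/-- Effect of a stellar subdivision on induced subcomplexes: restricting
to `W` does nothing if `F ⊄ W`, and restricting to `W ∪ {v}` gives the stellar
subdivision of the restriction if `F ⊆ W`. -/
theorem stellar_restriction {α : Type*} [DecidableEq α]
    (K Γ : SC α) (F : Finset α) (v : α) (h : IsStellar K Γ F v)
    (W : Finset α) (hW : W ⊆ K.V) :
    (¬ F ⊆ W → restrS Γ.faces W = restrS K.faces W) ∧
    (F ⊆ W → restrS Γ.faces (insert v W) = stellarS (restrS K.faces W) F v) := by
  obtain ⟨hF, hcard, hv, hV, hfaces⟩ := h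
  have hvW : v ∉ W := fun hvw => hv (hW hvw)
  constructor
  · intro hFW
    ext T
    simp only [restrS, hfaces, stellarS, Set.mem_setOf_eq, Set.mem_union]
    constructor
    · rintro ⟨h1 | ⟨S, T', hS, hT', rfl⟩, hTW⟩
      · exact ⟨h1.1, hTW⟩
      · exact absurd (hTW (Finset.mem_insert_self v _)) hvW
    · rintro ⟨hTK, hTW⟩
      exact ⟨Or.inl ⟨hTK, fun hFT => hFW (hFT.trans hTW)⟩, hTW⟩
  · intro hFW
    ext T
    simp only [restrS, hfaces, stellarS, Set.mem_setOf_eq, Set.mem_union]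
    constructor
    · rintro ⟨h1 | ⟨S, T', hS, hT', rfl⟩, hTW⟩
      · -- T ∈ K.faces, ¬ F ⊆ T
        have hvT : v ∉ T := fun hvT => hv (K.subset_V T h1.1 hvT)
        have hTW' : T ⊆ W := fun x hx =>
          (Finset.mem_insert.mp (hTW hx)).resolve_left (fun e => hvT (e ▸ hx))
        exact Or.inl ⟨⟨h1.1, hTW'⟩, h1.2⟩
      · refine Or.inr ⟨S, T', hS, ?_, rfl⟩
        rcases hT' with hT' | rfl
        · left
          refine ⟨hT'.1, hT'.2.1, hT'.2.2, ?_⟩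
          intro x hx
          rcases Finset.mem_union.mp hx with hx | hx
          · have hvT' : v ∉ T' := fun hvT' =>
              hv (K.subset_V _ hT'.2.2 (Finset.mem_union_left _ hvT'))
            have : x ∈ insert v (S ∪ T') := by
              exact Finset.mem_insert_of_mem (Finset.mem_union_right _ hx)
            exact (Finset.mem_insert.mp (hTW this)).resolve_left
              (fun e => hvT' (e ▸ hx))
          · exact hFW hx
        · right; rfl
    · rintro (⟨⟨hTK, hTW'⟩, hFT⟩ | ⟨S, T', hS, hT', rfl⟩)
      · exact ⟨Or.inl ⟨hTK, hFT⟩, hTW'.trans (Finset.subset_insert _ _)⟩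
      · constructor
        · refine Or.inr ⟨S, T', hS, ?_, rfl⟩
          rcases hT' with hT' | rfl
          · exact Or.inl ⟨hT'.1, hT'.2.1, hT'.2.2.1⟩
          · right; rfl
        · intro x hx
          rcases Finset.mem_insert.mp hx with rfl | hx
          · exact Finset.mem_insert_self _ _
          · refine Finset.mem_insert_of_mem ?_
            rcases Finset.mem_union.mp hx with hx | hx
            · exact hFW (hS.subset hx)
            · rcases hT' with hT' | rfl
              · exact (hT'.2.2.2 (Finset.mem_union_left _ hx))
              · exact absurd hx (Finset.notMem_empty x)
end

section
/- Let Δ be a finite simplicial complex and let e_1 and e_2 be distinct edges of Δ such that no face of Δ contains e_1 ∪ e_2 (i.e., e_1 and e_2 are contained in no common 2-face of Δ). Let u_1, u_2 be two distinct new vertices. Then e_2 is an edge of stellar_Δ(e_1), e_1 is an edge of stellar_Δ(e_2), and subdividing Δ first at e_1 (with new vertex u_1) and then at e_2 (with new vertex u_2) yields the same simplicial complex as subdividing first at e_2 (with u_2) and then at e_1 (with u_1). -/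
section Aux
variable {α : Type*} [DecidableEq α]

/-- The "new" faces of a stellar subdivision. -/
def stB (K : Set (Finset α)) (F : Finset α) (v : α) : Set (Finset α) :=
  {U | ∃ S T : Finset α, S ⊂ F ∧ (T ∈ lkS K F ∨ T = ∅) ∧ U = insert v (S ∪ T)}

lemma stellar_eq (K : Set (Finset α)) (F : Finset α) (v : α) :
    stellarS K F v = {T ∈ K | ¬ F ⊆ T} ∪ stB K F v := rfl

lemma not_sub_stB {K : Set (Finset α)} {e₁ e₂ : Finset α} {u₁ : α}
    (he₁ : e₁ ∈ K) (hcommon : ∀ T ∈ K, ¬ e₁ ∪ e₂ ⊆ T) (hu : u₁ ∉ e₂) :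
    ∀ U ∈ stB K e₁ u₁, ¬ e₂ ⊆ U := by
  rintro U ⟨S, T, hS, hT, rfl⟩ hsub
  have h2 : e₂ ⊆ S ∪ T := by
    intro x hx
    rcases Finset.mem_insert.1 (hsub hx) with h | h
    · exact absurd (h ▸ hx) hu
    · exact h
  rcases hT with hT | rfl
  · refine hcommon (T ∪ e₁) hT.2.2 (Finset.union_subset Finset.subset_union_right ?_)
    refine h2.trans (Finset.union_subset ?_ Finset.subset_union_left)
    exact hS.subset.trans Finset.subset_union_right
  · have : e₂ ⊆ e₁ := (h2.trans (Finset.union_subset hS.subset (Finset.empty_subset _)))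
    exact hcommon e₁ he₁ (Finset.union_subset (Finset.Subset.refl _) this)

lemma lk_stellar {K : Set (Finset α)} {e₁ e₂ : Finset α} {u₁ : α}
    (he₁ : e₁ ∈ K) (hcommon : ∀ T ∈ K, ¬ e₁ ∪ e₂ ⊆ T) (hu : u₁ ∉ e₂) :
    lkS (stellarS K e₁ u₁) e₂ = lkS K e₂ := by
  ext T
  constructor
  · rintro ⟨hne, hint, hmem⟩
    rcases hmem with ⟨hK, -⟩ | hB
    · exact ⟨hne, hint, hK⟩
    · exact absurd Finset.subset_union_right (not_sub_stB he₁ hcommon hu _ hB)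
  · rintro ⟨hne, hint, hK⟩
    refine ⟨hne, hint, Or.inl ⟨hK, fun h => ?_⟩⟩
    exact hcommon _ hK (Finset.union_subset h Finset.subset_union_right)

lemma double_stellar {K : Set (Finset α)} {e₁ e₂ : Finset α} {u₁ u₂ : α}
    (he₁ : e₁ ∈ K) (he₂ : e₂ ∈ K) (hcommon : ∀ T ∈ K, ¬ e₁ ∪ e₂ ⊆ T)
    (hu₁ : u₁ ∉ e₂) :
    stellarS (stellarS K e₁ u₁) e₂ u₂ =
      {T ∈ K | ¬ e₁ ⊆ T ∧ ¬ e₂ ⊆ T} ∪ stB K e₁ u₁ ∪ stB K e₂ u₂ := by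
  rw [stellar_eq]
  have hlk : stB (stellarS K e₁ u₁) e₂ u₂ = stB K e₂ u₂ := by
    unfold stB; rw [lk_stellar he₁ hcommon hu₁]
  rw [hlk]
  congr 1
  ext T
  constructor
  · rintro ⟨hmem, h2⟩
    rcases hmem with ⟨hK, h1⟩ | hB
    · exact Or.inl ⟨hK, h1, h2⟩
    · exact Or.inr hB
  · rintro (⟨hK, h1, h2⟩ | hB)
    · exact ⟨Or.inl ⟨hK, h1⟩, h2⟩
    · exact ⟨Or.inr hB, not_sub_stB he₁ hcommon hu₁ _ hB⟩

end Aux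

/-- If two distinct edges `e₁`, `e₂` of `Δ` lie in no common 2-face
(no face contains `e₁ ∪ e₂`), then each remains an edge after subdividing the other,
and the two edge subdivisions commute. -/
theorem edge_subdivisions_commute {α : Type*} [DecidableEq α]
    (Δ : SC α) (e₁ e₂ : Finset α)
    (he₁ : e₁ ∈ Δ.faces) (he₂ : e₂ ∈ Δ.faces)
    (hc₁ : e₁.card = 2) (hc₂ : e₂.card = 2) (hne : e₁ ≠ e₂)
    (hcommon : ∀ T ∈ Δ.faces, ¬ e₁ ∪ e₂ ⊆ T)
    (u₁ u₂ : α) (hu₁ : u₁ ∉ Δ.V) (hu₂ : u₂ ∉ Δ.V) (huu : u₁ ≠ u₂) :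
    e₂ ∈ stellarS Δ.faces e₁ u₁ ∧
    e₁ ∈ stellarS Δ.faces e₂ u₂ ∧
    stellarS (stellarS Δ.faces e₁ u₁) e₂ u₂ = stellarS (stellarS Δ.faces e₂ u₂) e₁ u₁ := by
  have h12 : ¬ e₁ ⊆ e₂ := fun h => hne (Finset.eq_of_subset_of_card_le h (by omega))
  have h21 : ¬ e₂ ⊆ e₁ := fun h => hne.symm (Finset.eq_of_subset_of_card_le h (by omega))
  have hcommon' : ∀ T ∈ Δ.faces, ¬ e₂ ∪ e₁ ⊆ T := by
    intro T hT h; exact hcommon T hT (by rwa [Finset.union_comm])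
  have hu₁e₂ : u₁ ∉ e₂ := fun h => hu₁ (Δ.subset_V e₂ he₂ h)
  have hu₂e₁ : u₂ ∉ e₁ := fun h => hu₂ (Δ.subset_V e₁ he₁ h)
  refine ⟨Or.inl ⟨he₂, h12⟩, Or.inl ⟨he₁, h21⟩, ?_⟩
  rw [double_stellar he₁ he₂ hcommon hu₁e₂, double_stellar he₂ he₁ hcommon' hu₂e₁]
  have : ∀ T : Finset α, (T ∈ Δ.faces ∧ ¬ e₁ ⊆ T ∧ ¬ e₂ ⊆ T) ↔
      (T ∈ Δ.faces ∧ ¬ e₂ ⊆ T ∧ ¬ e₁ ⊆ T) := fun T => by tauto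
  rw [Set.union_right_comm]
  congr 1
  congr 1
  ext T; exact this T
end

section
/- Let Δ be a finite flag simplicial complex and {a,b} an edge of Δ that is contained in no induced 4-cycle of the 1-skeleton of Δ. Then the contraction Δ/{a,b} is a flag simplicial complex. -/
/-- The faces of the contraction of the edge `{a,b}` to a new vertex `v`. -/
def contrS {α : Type*} [DecidableEq α] (K : Set (Finset α)) (a b v : α) :
    Set (Finset α) :=
  {T ∈ K | a ∉ T ∧ b ∉ T} ∪
  {U | ∃ T : Finset α, a ∉ T ∧ b ∉ T ∧ (insert a T ∈ K ∨ insert b T ∈ K) ∧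
    U = insert v T}

/-- The edge `{a,b}` is contained in an induced 4-cycle of the 1-skeleton: there are
vertices `y, z` so that `a, b, y, z` are four distinct vertices with edges `{a,b}`,
`{b,y}`, `{y,z}`, `{z,a}` and non-edges `{a,y}`, `{b,z}`. -/
def EdgeInInduced4 {α : Type*} [DecidableEq α] (K : Set (Finset α)) (a b : α) : Prop :=
  ∃ y z : α, y ≠ a ∧ y ≠ b ∧ z ≠ a ∧ z ≠ b ∧ y ≠ z ∧
    ({b, y} : Finset α) ∈ K ∧ ({y, z} : Finset α) ∈ K ∧ ({z, a} : Finset α) ∈ K ∧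
    ({a, y} : Finset α) ∉ K ∧ ({b, z} : Finset α) ∉ K


lemma mem_contrS {α : Type*} [DecidableEq α] {K : Set (Finset α)} {a b v : α}
    {U : Finset α} :
    U ∈ contrS K a b v ↔ (U ∈ K ∧ a ∉ U ∧ b ∉ U) ∨
      ∃ T : Finset α, a ∉ T ∧ b ∉ T ∧ (insert a T ∈ K ∨ insert b T ∈ K) ∧
        U = insert v T := Iff.rfl

lemma flag_clique {α : Type*} [DecidableEq α] (Δ : SC α) (hΔ : IsFlag Δ) :
    ∀ F : Finset α, F ⊆ Δ.V → F.Nonempty →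
      (∀ x ∈ F, ∀ y ∈ F, x ≠ y → ({x, y} : Finset α) ∈ Δ.faces) → F ∈ Δ.faces := by
  intro F
  induction F using Finset.strongInductionOn with
  | _ F ih =>
    intro hFV hne h2
    by_contra hF
    have hmiss : Missing Δ.faces F := by
      refine ⟨?_, hF, ?_⟩
      · by_contra h
        push_neg at h
        have h1 : F.card = 1 := le_antisymm (by omega) (Finset.one_le_card.mpr hne)
        obtain ⟨x, rfl⟩ := Finset.card_eq_one.mp h1
        exact hF (Δ.singleton_mem x (hFV (Finset.mem_singleton_self x)))
      · intro T hT hTne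
        exact ih T hT (hT.subset.trans hFV) hTne
          (fun x hx y hy hxy => h2 x (hT.subset hx) y (hT.subset hy) hxy)
    have hc2 := hΔ F hmiss
    obtain ⟨x, y, hxy, hFxy⟩ := Finset.card_eq_two.mp hc2
    apply hF
    rw [hFxy]
    exact h2 x (by rw [hFxy]; simp) y (by rw [hFxy]; simp) hxy

lemma pair_mem_of_insert {α : Type*} [DecidableEq α] (Δ : SC α) {c x : α} {T : Finset α}
    (h : insert c T ∈ Δ.faces) (hx : x ∈ T) : ({c, x} : Finset α) ∈ Δ.faces := by
  refine Δ.down_closed _ h _ ?_ ⟨c, by simp⟩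
  intro t ht
  rcases Finset.mem_insert.mp ht with rfl | ht
  · exact Finset.mem_insert_self _ _
  · exact Finset.mem_insert_of_mem (Finset.mem_singleton.mp ht ▸ hx)


/-- Contracting an edge of a flag complex that lies in no induced 4-cycle
of the 1-skeleton yields a flag simplicial complex. -/
theorem contraction_of_flag_is_flag {α : Type*} [DecidableEq α]
    (Δ : SC α) (hΔ : IsFlag Δ) (a b : α) (hab : a ≠ b)
    (he : ({a, b} : Finset α) ∈ Δ.faces)
    (hno4 : ¬ EdgeInInduced4 Δ.faces a b)
    (v : α) (hv : v ∉ Δ.V) :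
    ∃ Δ' : SC α, Δ'.V = insert v (Δ.V \ {a, b}) ∧
      Δ'.faces = contrS Δ.faces a b v ∧ IsFlag Δ' := by
  have haV : a ∈ Δ.V := Δ.subset_V _ he (by simp)
  have hbV : b ∈ Δ.V := Δ.subset_V _ he (by simp)
  have hva : v ≠ a := fun h => hv (h ▸ haV)
  have hvb : v ≠ b := fun h => hv (h ▸ hbV)
  refine ⟨⟨insert v (Δ.V \ {a, b}), contrS Δ.faces a b v, ?_, ?_, ?_, ?_⟩, rfl, rfl, ?_⟩
  · -- nonempty_mem
    intro F hF
    rcases mem_contrS.mp hF with ⟨hFK, _, _⟩ | ⟨T, _, _, _, rfl⟩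
    · exact Δ.nonempty_mem _ hFK
    · exact ⟨v, Finset.mem_insert_self _ _⟩
  · -- subset_V
    intro F hF
    rcases mem_contrS.mp hF with ⟨hFK, haF, hbF⟩ | ⟨T, haT, hbT, hKT, rfl⟩
    · intro t ht
      refine Finset.mem_insert_of_mem (Finset.mem_sdiff.mpr ⟨Δ.subset_V _ hFK ht, ?_⟩)
      simp only [Finset.mem_insert, Finset.mem_singleton]
      rintro (rfl | rfl)
      exacts [haF ht, hbF ht]
    · have hTV : T ⊆ Δ.V := by
        rcases hKT with h | h
        · exact (Finset.subset_insert _ _).trans (Δ.subset_V _ h)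
        · exact (Finset.subset_insert _ _).trans (Δ.subset_V _ h)
      intro t ht
      rcases Finset.mem_insert.mp ht with rfl | ht
      · exact Finset.mem_insert_self _ _
      · refine Finset.mem_insert_of_mem (Finset.mem_sdiff.mpr ⟨hTV ht, ?_⟩)
        simp only [Finset.mem_insert, Finset.mem_singleton]
        rintro (rfl | rfl)
        exacts [haT ht, hbT ht]
  · -- down_closed
    intro F hF T hT hTne
    rcases mem_contrS.mp hF with ⟨hFK, haF, hbF⟩ | ⟨S, haS, hbS, hKS, rfl⟩
    · exact Or.inl ⟨Δ.down_closed _ hFK _ hT hTne, fun h => haF (hT h), fun h => hbF (hT h)⟩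
    · by_cases hvT : v ∈ T
      · refine Or.inr ⟨T.erase v, ?_, ?_, ?_, (Finset.insert_erase hvT).symm⟩
        · intro h; exact haS (Finset.mem_of_mem_erase (by
            rcases Finset.mem_insert.mp (hT (Finset.mem_of_mem_erase h)) with h' | h'
            · exact absurd h' (Finset.ne_of_mem_erase h)
            · exact Finset.mem_erase.mpr ⟨(Finset.ne_of_mem_erase h), h'⟩))
        · intro h; exact hbS (Finset.mem_of_mem_erase (by
            rcases Finset.mem_insert.mp (hT (Finset.mem_of_mem_erase h)) with h' | h'
            · exact absurd h' (Finset.ne_of_mem_erase h)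
            · exact Finset.mem_erase.mpr ⟨(Finset.ne_of_mem_erase h), h'⟩))
        · have hsub : T.erase v ⊆ S := by
            intro t ht
            rcases Finset.mem_insert.mp (hT (Finset.mem_of_mem_erase ht)) with h' | h'
            · exact absurd h' (Finset.ne_of_mem_erase ht)
            · exact h'
          rcases hKS with h | h
          · exact Or.inl (Δ.down_closed _ h _ (Finset.insert_subset_insert _ hsub)
              ⟨a, Finset.mem_insert_self _ _⟩)
          · exact Or.inr (Δ.down_closed _ h _ (Finset.insert_subset_insert _ hsub)
              ⟨b, Finset.mem_insert_self _ _⟩)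
      · have hsub : T ⊆ S := by
          intro t ht
          rcases Finset.mem_insert.mp (hT ht) with rfl | h'
          · exact absurd ht hvT
          · exact h'
        have hTK : T ∈ Δ.faces := by
          rcases hKS with h | h
          · exact Δ.down_closed _ h _ (hsub.trans (Finset.subset_insert _ _)) hTne
          · exact Δ.down_closed _ h _ (hsub.trans (Finset.subset_insert _ _)) hTne
        exact Or.inl ⟨hTK, fun h => haS (hsub h), fun h => hbS (hsub h)⟩
  · -- singleton_mem
    intro x hx
    rcases Finset.mem_insert.mp hx with rfl | hx
    · refine Or.inr ⟨∅, by simp, by simp, Or.inl ?_, by simp⟩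
      simpa using Δ.singleton_mem a haV
    · obtain ⟨hxV, hxab⟩ := Finset.mem_sdiff.mp hx
      simp only [Finset.mem_insert, Finset.mem_singleton, not_or] at hxab
      exact Or.inl ⟨Δ.singleton_mem x hxV, by simp [Ne.symm hxab.1], by simp [Ne.symm hxab.2]⟩
  · -- IsFlag
    intro M hmiss
    by_contra hcard2
    have hcard3 : 3 ≤ M.card := by
      have h2 := hmiss.1
      rcases lt_or_ge M.card 3 with h | h
      · exact absurd (by omega : M.card = 2) hcard2
      · exact h
    by_cases hvM : v ∈ M
    · -- case v ∈ M
      set S := M.erase v with hSdef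
      have hSM : S ⊂ M := Finset.erase_ssubset hvM
      have hScard : 2 ≤ S.card := by
        have hc : S.card = M.card - 1 := by
          rw [hSdef]; exact Finset.card_erase_of_mem hvM
        omega
      have hSne : S.Nonempty := Finset.card_pos.mp (by omega)
      have hS := hmiss.2.2 S hSM hSne
      have hvS : v ∉ S := Finset.notMem_erase _ _
      obtain ⟨hSK, haS, hbS⟩ : S ∈ Δ.faces ∧ a ∉ S ∧ b ∉ S := by
        rcases mem_contrS.mp hS with h | ⟨T, _, _, _, hEq⟩
        · exact h
        · exact absurd (hEq ▸ Finset.mem_insert_self v T) hvS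
      have hSV : S ⊆ Δ.V := Δ.subset_V _ hSK
      have hxS : ∀ x ∈ S, insert a (S.erase x) ∈ Δ.faces ∨ insert b (S.erase x) ∈ Δ.faces := by
        intro x hx
        have hxM : x ∈ M := Finset.mem_of_mem_erase hx
        have hxv : x ≠ v := Finset.ne_of_mem_erase hx
        have hMx : M.erase x ⊂ M := Finset.erase_ssubset hxM
        have hvMx : v ∈ M.erase x := Finset.mem_erase.mpr ⟨Ne.symm hxv, hvM⟩
        have h := hmiss.2.2 _ hMx ⟨v, hvMx⟩
        rcases mem_contrS.mp h with ⟨hK, _, _⟩ | ⟨T, haT, hbT, hKT, hEq⟩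
        · exact absurd (Δ.subset_V _ hK hvMx) hv
        · have hvT : v ∉ T := by
            intro hvT
            rcases hKT with h' | h'
            · exact hv (Δ.subset_V _ h' (Finset.mem_insert_of_mem hvT))
            · exact hv (Δ.subset_V _ h' (Finset.mem_insert_of_mem hvT))
          have hTEq : T = S.erase x := by
            have h1 : (M.erase x).erase v = T := by rw [hEq, Finset.erase_insert hvT]
            rw [← h1, Finset.erase_right_comm]
          rwa [hTEq] at hKT
      by_cases hA : ∀ x ∈ S, ({a, x} : Finset α) ∈ Δ.faces
      · -- insert a S is a clique
        have hins : insert a S ∈ Δ.faces := by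
          refine flag_clique Δ hΔ _ (Finset.insert_subset haV hSV)
            ⟨a, Finset.mem_insert_self _ _⟩ ?_
          intro x hx y hy hxy
          rcases Finset.mem_insert.mp hx with hxa | hx'
          · rcases Finset.mem_insert.mp hy with hya | hy'
            · exact absurd (hxa.trans hya.symm) hxy
            · rw [hxa]; exact hA y hy'
          · rcases Finset.mem_insert.mp hy with hya | hy'
            · rw [hya, Finset.pair_comm]; exact hA x hx'
            · refine Δ.down_closed _ hSK _ ?_ ⟨x, by simp⟩
              intro t ht
              rcases Finset.mem_insert.mp ht with rfl | ht
              · exact hx'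
              · exact Finset.mem_singleton.mp ht ▸ hy'
        exact hmiss.2.1 (Or.inr ⟨S, haS, hbS, Or.inl hins, (Finset.insert_erase hvM).symm⟩)
      · push_neg at hA
        obtain ⟨y, hyS, hay⟩ := hA
        by_cases hB : ∀ x ∈ S, ({b, x} : Finset α) ∈ Δ.faces
        · have hins : insert b S ∈ Δ.faces := by
            refine flag_clique Δ hΔ _ (Finset.insert_subset hbV hSV)
              ⟨b, Finset.mem_insert_self _ _⟩ ?_
            intro x hx y hy hxy
            rcases Finset.mem_insert.mp hx with hxa | hx'
            · rcases Finset.mem_insert.mp hy with hya | hy'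
              · exact absurd (hxa.trans hya.symm) hxy
              · rw [hxa]; exact hB y hy'
            · rcases Finset.mem_insert.mp hy with hya | hy'
              · rw [hya, Finset.pair_comm]; exact hB x hx'
              · refine Δ.down_closed _ hSK _ ?_ ⟨x, by simp⟩
                intro t ht
                rcases Finset.mem_insert.mp ht with rfl | ht
                · exact hx'
                · exact Finset.mem_singleton.mp ht ▸ hy'
          exact hmiss.2.1 (Or.inr ⟨S, haS, hbS, Or.inr hins, (Finset.insert_erase hvM).symm⟩)
        · push_neg at hB
          obtain ⟨z, hzS, hbz⟩ := hB
          have hya : y ≠ a := by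
            rintro rfl
            exact hay (by simpa using Δ.singleton_mem y haV)
          have hyb : y ≠ b := by rintro rfl; exact hay he
          have hzb : z ≠ b := by
            rintro rfl
            exact hbz (by simpa using Δ.singleton_mem z hbV)
          have hza : z ≠ a := by
            rintro rfl
            exact hbz (by rwa [Finset.pair_comm] at he)
          have hyz : y ≠ z := by
            rintro rfl
            obtain ⟨x, hxS', hxy⟩ := Finset.exists_mem_ne (s := S) (by omega) y
            rcases hxS x hxS' with h | h
            · exact hay (pair_mem_of_insert Δ h (Finset.mem_erase.mpr ⟨Ne.symm hxy, hyS⟩))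
            · exact hbz (pair_mem_of_insert Δ h (Finset.mem_erase.mpr ⟨Ne.symm hxy, hzS⟩))
          have hSyz : S = {y, z} := by
            apply Finset.Subset.antisymm
            · intro x hx
              by_contra hxyz
              simp only [Finset.mem_insert, Finset.mem_singleton, not_or] at hxyz
              obtain ⟨hxy, hxz⟩ := hxyz
              rcases hxS x hx with h | h
              · exact hay (pair_mem_of_insert Δ h (Finset.mem_erase.mpr ⟨Ne.symm hxy, hyS⟩))
              · exact hbz (pair_mem_of_insert Δ h (Finset.mem_erase.mpr ⟨Ne.symm hxz, hzS⟩))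
            · intro t ht
              rcases Finset.mem_insert.mp ht with rfl | ht
              · exact hyS
              · exact Finset.mem_singleton.mp ht ▸ hzS
          have hSz : S.erase z = {y} := by
            rw [hSyz]
            ext t
            simp only [Finset.mem_erase, Finset.mem_insert, Finset.mem_singleton]
            constructor
            · rintro ⟨htz, rfl | rfl⟩
              · rfl
              · exact absurd rfl htz
            · rintro rfl
              exact ⟨hyz, Or.inl rfl⟩
          have hSy : S.erase y = {z} := by
            rw [hSyz]
            ext t
            simp only [Finset.mem_erase, Finset.mem_insert, Finset.mem_singleton]
            constructor
            · rintro ⟨hty, rfl | rfl⟩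
              · exact absurd rfl hty
              · rfl
            · rintro rfl
              exact ⟨Ne.symm hyz, Or.inr rfl⟩
          have hby : ({b, y} : Finset α) ∈ Δ.faces := by
            rcases hxS z hzS with h | h
            · rw [hSz] at h; exact absurd h hay
            · rwa [hSz] at h
          have haz : ({z, a} : Finset α) ∈ Δ.faces := by
            rcases hxS y hyS with h | h
            · rw [hSy] at h; rwa [Finset.pair_comm] at h
            · rw [hSy] at h; exact absurd h hbz
          exact hno4 ⟨y, z, hya, hyb, hza, hzb, hyz, hby, hSyz ▸ hSK, haz, hay, hbz⟩
    · -- case v ∉ M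
      have hmem : ∀ x ∈ M, ({x} : Finset α) ∈ Δ.faces ∧ x ≠ a ∧ x ≠ b := by
        intro x hxM
        have hsub : ({x} : Finset α) ⊂ M := by
          refine Finset.ssubset_iff_subset_ne.mpr ⟨Finset.singleton_subset_iff.mpr hxM, ?_⟩
          intro h
          rw [← h] at hcard3
          simp at hcard3
        have h := hmiss.2.2 _ hsub (Finset.singleton_nonempty x)
        rcases mem_contrS.mp h with ⟨hK, ha', hb'⟩ | ⟨T, _, _, _, hEq⟩
        · exact ⟨hK, fun hh => ha' (by simp [hh]), fun hh => hb' (by simp [hh])⟩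
        · have : v ∈ ({x} : Finset α) := hEq ▸ Finset.mem_insert_self v T
          simp only [Finset.mem_singleton] at this
          exact absurd hxM (this ▸ hvM)
      have hMK : Missing Δ.faces M := by
        refine ⟨hmiss.1, ?_, ?_⟩
        · intro hM
          exact hmiss.2.1 (Or.inl ⟨hM, fun h => (hmem a h).2.1 rfl, fun h => (hmem b h).2.2 rfl⟩)
        · intro T hT hTne
          have h := hmiss.2.2 T hT hTne
          rcases mem_contrS.mp h with ⟨hK, _, _⟩ | ⟨T', _, _, _, hEq⟩
          · exact hK
          · exact absurd (hT.subset (hEq ▸ Finset.mem_insert_self v T')) hvM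
      exact hcard2 (hΔ M hMK)
end

section
/- Let Δ be a finite flag simplicial complex on vertex set V, e = {a,b} an edge of Δ, v ∉ V a new vertex, and Γ the stellar subdivision of Δ at e with new vertex v. Then the edge {v,a} of Γ is contained in no induced 4-cycle of the 1-skeleton of Γ, and the contraction Γ/{v,a} is isomorphic to Δ. -/
/-- After subdividing the edge `{a,b}` of a flag complex `Δ` with new
vertex `v`, the edge `{v,a}` of the subdivision `Γ` lies in no induced 4-cycle of the
1-skeleton of `Γ`, and contracting `{v,a}` yields a complex isomorphic to `Δ`. -/
theorem subdivided_edge_contracts_back {α : Type*} [DecidableEq α]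
    (Δ Γ : SC α) (hΔ : IsFlag Δ) (a b : α) (hab : a ≠ b) (v : α)
    (h : IsStellar Δ Γ {a, b} v) :
    ¬ EdgeInInduced4 Γ.faces v a ∧
    ∀ u : α, u ∉ Γ.V →
      IsomS (contrS Γ.faces v a u) (insert u ((↑Γ.V : Set α) \ {v, a}))
        Δ.faces ↑Δ.V := by
  obtain ⟨hF, _hcard, hv, hV, hfaces⟩ := h
  have haV : a ∈ Δ.V := Δ.subset_V _ hF (by simp)
  have hbV : b ∈ Δ.V := Δ.subset_V _ hF (by simp)
  have hva : v ≠ a := fun e => hv (e ▸ haV)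
  have hvb : v ≠ b := fun e => hv (e ▸ hbV)
  -- membership lemmas for Γ
  have hΓ1 : ∀ E : Finset α, v ∉ E →
      (E ∈ Γ.faces ↔ E ∈ Δ.faces ∧ ¬ ({a, b} : Finset α) ⊆ E) := by
    intro E hvE
    rw [hfaces]
    simp only [stellarS, Set.mem_union, Set.mem_sep_iff, Set.mem_setOf_eq]
    constructor
    · rintro (⟨h1, h2⟩ | ⟨S, T, hS, hT, rfl⟩)
      · exact ⟨h1, h2⟩
      · exact absurd (Finset.mem_insert_self v _) hvE
    · exact fun h1 => Or.inl h1
  have hΓ2 : ∀ E : Finset α, v ∈ E →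
      (E ∈ Γ.faces ↔ ∃ S T : Finset α, S ⊂ {a, b} ∧
        (T ∈ lkS Δ.faces {a, b} ∨ T = ∅) ∧ E = insert v (S ∪ T)) := by
    intro E hvE
    rw [hfaces]
    simp only [stellarS, Set.mem_union, Set.mem_sep_iff, Set.mem_setOf_eq]
    constructor
    · rintro (⟨h1, _⟩ | hE)
      · exact absurd (Δ.subset_V E h1 hvE) hv
      · exact hE
    · exact Or.inr
  have hvlk : ∀ T ∈ lkS Δ.faces ({a, b} : Finset α), v ∉ T := by
    rintro T ⟨_, _, hTU⟩ hvT
    exact hv (Δ.subset_V _ hTU (Finset.mem_union_left _ hvT))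
  -- characterization of edges at v
  have hedgev : ∀ x, x ≠ v →
      (({v, x} : Finset α) ∈ Γ.faces ↔ x = a ∨ x = b ∨ insert x {a, b} ∈ Δ.faces) := by
    intro x hxv
    rw [hΓ2 _ (by simp)]
    constructor
    · rintro ⟨S, T, hS, hT, hE⟩
      have hvS : v ∉ S := by
        intro hmem
        have := hS.subset hmem
        simp only [Finset.mem_insert, Finset.mem_singleton] at this
        rcases this with rfl | rfl
        · exact hva rfl
        · exact hvb rfl
      have hvT : v ∉ T := by
        rcases hT with hTlk | rfl
        · exact hvlk T hTlk
        · simp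
      have hvST : v ∉ S ∪ T := by simp [hvS, hvT]
      have hST : S ∪ T = {x} := by
        have h1 : (insert v (S ∪ T)).erase v = (({v, x} : Finset α)).erase v := by
          rw [hE]
        rwa [Finset.erase_insert hvST,
          show ({v, x} : Finset α) = insert v {x} from rfl,
          Finset.erase_insert (by simp [Ne.symm hxv])] at h1
      have hxST : x ∈ S ∪ T := by rw [hST]; simp
      rcases Finset.mem_union.mp hxST with hxS | hxT
      · have := hS.subset hxS
        simp only [Finset.mem_insert, Finset.mem_singleton] at this
        tauto
      · rcases hT with hTlk | rfl
        · obtain ⟨_, _, hTU⟩ := hTlk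
          have hTx : T = {x} := by
            apply Finset.Subset.antisymm
            · exact fun y hy => hST ▸ Finset.mem_union_right S hy
            · simp [hxT]
          right; right
          have : T ∪ ({a, b} : Finset α) = insert x {a, b} := by
            rw [hTx]; ext w; simp; tauto
          rwa [this] at hTU
        · simp at hxT
    · intro hx
      by_cases hxa : x = a
      · refine ⟨{a}, ∅, ?_, Or.inr rfl, by subst hxa; simp⟩
        rw [Finset.ssubset_def]
        refine ⟨by simp, fun hc => ?_⟩
        have := hc (by simp : b ∈ ({a, b} : Finset α))
        simp only [Finset.mem_singleton] at this
        exact hab this.symm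
      · by_cases hxb : x = b
        · refine ⟨{b}, ∅, ?_, Or.inr rfl, by subst hxb; simp⟩
          rw [Finset.ssubset_def]
          refine ⟨by simp, fun hc => ?_⟩
          have := hc (by simp : a ∈ ({a, b} : Finset α))
          simp only [Finset.mem_singleton] at this
          exact hab this
        · have hins : insert x {a, b} ∈ Δ.faces := by tauto
          refine ⟨∅, {x}, Finset.empty_ssubset.mpr ⟨a, by simp⟩, Or.inl ?_, by simp⟩
          exact ⟨Finset.singleton_nonempty x, by simp [Finset.singleton_inter_of_notMem,
            hxa, hxb], by rw [show ({x} ∪ {a, b} : Finset α) = {x, a, b} by ext w; simp; tauto]; exact hins⟩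
  -- {a,b} is not a face of Γ
  constructor
  · -- no induced 4-cycle through {v,a}
    rintro ⟨y, z, hyv, hya, hzv, hza, hyz, hay, hyz2, hzv2, hvy, haz⟩
    have hz : z = a ∨ z = b ∨ insert z {a, b} ∈ Δ.faces := by
      apply (hedgev z hzv).mp
      rwa [Finset.pair_comm v z]
    by_cases hzb : z = b
    · -- z = b case
      subst hzb
      have hvay : v ∉ ({a, y} : Finset α) := by simp [hva, Ne.symm hyv]
      have hay' : ({a, y} : Finset α) ∈ Δ.faces := ((hΓ1 _ hvay).mp hay).1
      have hvyb : v ∉ ({y, z} : Finset α) := by simp [Ne.symm hyv, hvb]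
      have hyb' : ({y, z} : Finset α) ∈ Δ.faces := ((hΓ1 _ hvyb).mp hyz2).1
      have hyab : y ∉ ({a, z} : Finset α) := by simp [hya, hyz]
      have hyΔV : y ∈ Δ.V := Δ.subset_V _ hay' (by simp)
      have hins : insert y {a, z} ∈ Δ.faces := by
        by_contra hno
        have hmiss : Missing Δ.faces (insert y {a, z}) := by
          refine ⟨?_, hno, ?_⟩
          · rw [Finset.card_insert_of_notMem hyab]
            omega
          · intro T hT hTne
            by_cases hbT : z ∈ T
            · by_cases haT : a ∈ T
              · have hyT : y ∉ T := by
                  intro hy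
                  apply hT.ne
                  apply Finset.Subset.antisymm hT.subset
                  intro w hw
                  simp only [Finset.mem_insert, Finset.mem_singleton] at hw
                  rcases hw with rfl | rfl | rfl <;> assumption
                refine Δ.down_closed _ hF T ?_ hTne
                intro w hw
                have := hT.subset hw
                simp only [Finset.mem_insert, Finset.mem_singleton] at this ⊢
                rcases this with rfl | rfl | rfl
                · exact absurd hw hyT
                · exact Or.inl rfl
                · exact Or.inr rfl
              · refine Δ.down_closed _ hyb' T ?_ hTne
                intro w hw
                have := hT.subset hw
                simp only [Finset.mem_insert, Finset.mem_singleton] at this ⊢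
                rcases this with rfl | rfl | rfl
                · exact Or.inl rfl
                · exact absurd hw haT
                · exact Or.inr rfl
            · refine Δ.down_closed _ hay' T ?_ hTne
              intro w hw
              have := hT.subset hw
              simp only [Finset.mem_insert, Finset.mem_singleton] at this ⊢
              rcases this with rfl | rfl | rfl
              · exact Or.inr rfl
              · exact Or.inl rfl
              · exact absurd hw hbT
        have := hΔ _ hmiss
        rw [Finset.card_insert_of_notMem hyab] at this
        have h2 : ({a, z} : Finset α).card = 2 := by
          rw [Finset.card_insert_of_notMem (by simp [hab]), Finset.card_singleton]
        omega
      exact hvy ((hedgev y hyv).mpr (Or.inr (Or.inr hins)))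
    · -- z ≠ b case
      have hzab : insert z {a, b} ∈ Δ.faces := by
        rcases hz with hz1 | hz1 | hz1
        · exact absurd hz1 hza
        · exact absurd hz1 hzb
        · exact hz1
      have haz' : ({a, z} : Finset α) ∈ Δ.faces := by
        refine Δ.down_closed _ hzab {a, z} ?_ ⟨a, by simp⟩
        intro w hw
        simp only [Finset.mem_insert, Finset.mem_singleton] at hw ⊢
        tauto
      apply haz
      apply (hΓ1 _ (by simp [hva, Ne.symm hzv])).mpr
      refine ⟨haz', fun hsub => ?_⟩
      have := hsub (by simp : b ∈ ({a, b} : Finset α))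
      simp only [Finset.mem_insert, Finset.mem_singleton] at this
      rcases this with hb1 | hb1
      · exact hab hb1.symm
      · exact hzb hb1.symm
  · -- contraction is isomorphic to Δ
    intro u hu
    have huΔ : u ∉ Δ.V := fun hmem => hu (by rw [hV]; exact Finset.mem_insert_of_mem hmem)
    have hua : u ≠ a := fun e => huΔ (e ▸ haV)
    have huv : u ≠ v := fun e => hu (by rw [hV, e]; exact Finset.mem_insert_self v _)
    -- key face lemmas
    have hinsa : ∀ T' : Finset α, a ∉ T' → v ∉ T' →
        (insert a T' ∈ Γ.faces ↔ insert a T' ∈ Δ.faces ∧ b ∉ T') := by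
      intro T' ha' hv'
      rw [hΓ1 _ (by simp [hva, hv'])]
      simp [Finset.insert_subset_iff, Ne.symm hab]
    have hinsv : ∀ T' : Finset α, a ∉ T' → v ∉ T' →
        (insert v T' ∈ Γ.faces ↔ T' ⊆ {b} ∨ insert a (insert b T') ∈ Δ.faces) := by
      intro T' ha' hv'
      rw [hΓ2 _ (Finset.mem_insert_self v T')]
      constructor
      · rintro ⟨S, T, hS, hT, heq⟩
        have hvS : v ∉ S := by
          intro hmem
          have := hS.subset hmem
          simp only [Finset.mem_insert, Finset.mem_singleton] at this
          rcases this with rfl | rfl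
          · exact hva rfl
          · exact hvb rfl
        have hvT : v ∉ T := by
          rcases hT with hTlk | rfl
          · exact hvlk T hTlk
          · simp
        have hT'eq : T' = S ∪ T := by
          have h1 : (insert v T').erase v = (insert v (S ∪ T)).erase v := by rw [heq]
          rwa [Finset.erase_insert hv', Finset.erase_insert (by simp [hvS, hvT])] at h1
        rcases hT with hTlk | rfl
        · right
          obtain ⟨hTne, hTd, hTU⟩ := hTlk
          have hkey : insert a (insert b T') = T ∪ {a, b} := by
            rw [hT'eq]
            ext x
            simp only [Finset.mem_insert, Finset.mem_union, Finset.mem_singleton]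
            constructor
            · rintro (rfl | rfl | hx)
              · right; left; rfl
              · right; right; rfl
              · rcases hx with hxS | hxT
                · have := hS.subset hxS
                  simp only [Finset.mem_insert, Finset.mem_singleton] at this
                  tauto
                · exact Or.inl hxT
            · rintro (hx | rfl | rfl)
              · right; right; exact Or.inr hx
              · exact Or.inl rfl
              · exact Or.inr (Or.inl rfl)
          rw [hkey]
          exact hTU
        · left
          intro x hx
          rw [hT'eq, Finset.union_empty] at hx
          have := hS.subset hx
          simp only [Finset.mem_insert, Finset.mem_singleton] at this ⊢
          rcases this with rfl | rfl
          · exact absurd (by rwa [hT'eq, Finset.union_empty]) ha'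
          · rfl
      · rintro (hTb | hD)
        · rcases Finset.subset_singleton_iff.mp hTb with rfl | rfl
          · exact ⟨∅, ∅, Finset.empty_ssubset.mpr ⟨a, by simp⟩, Or.inr rfl, by simp⟩
          · refine ⟨{b}, ∅, ?_, Or.inr rfl, by simp⟩
            rw [Finset.ssubset_def]
            refine ⟨by simp, fun hc => ?_⟩
            have := hc (by simp : a ∈ ({a, b} : Finset α))
            simp only [Finset.mem_singleton] at this
            exact hab this
        · refine ⟨T' ∩ {b}, T' \ {b}, ?_, ?_, ?_⟩
          · rw [Finset.ssubset_def]
            constructor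
            · intro x hx
              simp only [Finset.mem_inter, Finset.mem_singleton] at hx
              simp [hx.2]
            · intro hc
              have := hc (by simp : a ∈ ({a, b} : Finset α))
              simp only [Finset.mem_inter, Finset.mem_singleton] at this
              exact ha' this.1
          · by_cases hTb' : T' \ {b} = ∅
            · exact Or.inr hTb'
            · left
              refine ⟨Finset.nonempty_iff_ne_empty.mpr hTb', ?_, ?_⟩
              · apply Finset.eq_empty_iff_forall_notMem.mpr
                intro x hx
                simp only [Finset.mem_inter, Finset.mem_sdiff, Finset.mem_insert,
                  Finset.mem_singleton] at hx
                obtain ⟨⟨h1, h2⟩, h3⟩ := hx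
                rcases h3 with rfl | rfl
                · exact ha' h1
                · exact h2 rfl
              · have hkey : T' \ {b} ∪ ({a, b} : Finset α) = insert a (insert b T') := by
                  ext x
                  simp only [Finset.mem_union, Finset.mem_sdiff, Finset.mem_insert,
                    Finset.mem_singleton]
                  constructor
                  · rintro (⟨h1, _⟩ | rfl | rfl)
                    · exact Or.inr (Or.inr h1)
                    · exact Or.inl rfl
                    · exact Or.inr (Or.inl rfl)
                  · rintro (rfl | rfl | hx)
                    · exact Or.inr (Or.inl rfl)
                    · exact Or.inr (Or.inr rfl)
                    · by_cases hxb : x = b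
                      · exact Or.inr (Or.inr hxb)
                      · exact Or.inl ⟨hx, hxb⟩
                rw [hkey]
                exact hD
          · congr 1
            ext x
            simp only [Finset.mem_union, Finset.mem_inter, Finset.mem_sdiff,
              Finset.mem_singleton]
            tauto
    have hmain : ∀ T' : Finset α, T' ⊆ Δ.V → a ∉ T' →
        ((insert v T' ∈ Γ.faces ∨ insert a T' ∈ Γ.faces) ↔ insert a T' ∈ Δ.faces) := by
      intro T' hsub ha'
      have hv' : v ∉ T' := fun hmem => hv (hsub hmem)
      constructor
      · rintro (h1 | h1)
        · rcases (hinsv T' ha' hv').mp h1 with hTb | hD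
          · rcases Finset.subset_singleton_iff.mp hTb with rfl | rfl
            · simpa using Δ.singleton_mem a haV
            · exact hF
          · refine Δ.down_closed _ hD (insert a T') ?_ ⟨a, Finset.mem_insert_self a T'⟩
            intro x hx
            simp only [Finset.mem_insert] at hx ⊢
            tauto
        · exact ((hinsa T' ha' hv').mp h1).1
      · intro hD
        by_cases hbT : b ∈ T'
        · left
          apply (hinsv T' ha' hv').mpr
          right
          rwa [Finset.insert_eq_self.mpr hbT]
        · right
          exact (hinsa T' ha' hv').mpr ⟨hD, hbT⟩
    -- the isomorphism
    refine ⟨fun x => if x = u then a else x, ⟨?_, ?_, ?_⟩, ?_⟩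
    case _ => -- MapsTo
      intro x hx
      simp only [Set.mem_insert_iff, Set.mem_diff, Finset.mem_coe, Set.mem_singleton_iff] at hx
      rcases hx with rfl | ⟨hxΓ, hxva⟩
      · simp [haV]
      · have hxu : x ≠ u := fun e => hu (e ▸ hxΓ)
        simp only [if_neg hxu, Finset.mem_coe]
        rw [hV] at hxΓ
        rcases Finset.mem_insert.mp hxΓ with rfl | hxΔ
        · exact absurd rfl (by push_neg at hxva; exact hxva.1)
        · exact hxΔ
    case _ => -- InjOn
      intro x hx y hy hxy
      simp only [Set.mem_insert_iff, Set.mem_diff, Finset.mem_coe, Set.mem_singleton_iff] at hx hy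
      by_cases hxu : x = u <;> by_cases hyu : y = u
      · rw [hxu, hyu]
      · simp only [if_pos hxu, if_neg hyu] at hxy
        rcases hy with rfl | ⟨_, hy2⟩
        · exact absurd rfl hyu
        · exact absurd hxy.symm (by tauto)
      · simp only [if_neg hxu, if_pos hyu] at hxy
        rcases hx with rfl | ⟨_, hx2⟩
        · exact absurd rfl hxu
        · exact absurd hxy (by tauto)
      · simpa [if_neg hxu, if_neg hyu] using hxy
    case _ => -- SurjOn
      intro y hy
      simp only [Finset.mem_coe] at hy
      by_cases hya : y = a
      · exact ⟨u, Set.mem_insert u _, by simp [hya]⟩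
      · have hyΓ : y ∈ Γ.V := by rw [hV]; exact Finset.mem_insert_of_mem hy
        have hyu : y ≠ u := fun e => hu (e ▸ hyΓ)
        refine ⟨y, Set.mem_insert_of_mem _ ⟨hyΓ, ?_⟩, by simp [hyu]⟩
        simp only [Set.mem_insert_iff, Set.mem_singleton_iff]
        push_neg
        exact ⟨fun e => hv (e ▸ hy), hya⟩
    case _ => -- faces
      intro T hTsub
      have hTmem : ∀ x ∈ T, x = u ∨ (x ∈ Δ.V ∧ x ≠ v ∧ x ≠ a) := by
        intro x hx
        have := hTsub (Finset.mem_coe.mpr hx)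
        simp only [Set.mem_insert_iff, Set.mem_diff, Finset.mem_coe,
          Set.mem_singleton_iff] at this
        rcases this with rfl | ⟨hxΓ, hxva⟩
        · exact Or.inl rfl
        · push_neg at hxva
          right
          rw [hV] at hxΓ
          rcases Finset.mem_insert.mp hxΓ with rfl | hxΔ
          · exact absurd rfl hxva.1
          · exact ⟨hxΔ, hxva.1, hxva.2⟩
      by_cases huT : u ∈ T
      · -- case u ∈ T
        have huT' : u ∉ T.erase u := Finset.notMem_erase u T
        have hT : T = insert u (T.erase u) := (Finset.insert_erase huT).symm
        have hmemT' : ∀ x ∈ T.erase u, x ∈ Δ.V ∧ x ≠ v ∧ x ≠ a := by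
          intro x hx
          rcases hTmem x (Finset.mem_of_mem_erase hx) with rfl | h2
          · exact absurd hx huT'
          · exact h2
        have haT' : a ∉ T.erase u := fun hmem => (hmemT' a hmem).2.2 rfl
        have hvT' : v ∉ T.erase u := fun hmem => (hmemT' v hmem).2.1 rfl
        have hsubΔ : T.erase u ⊆ Δ.V := fun x hx => (hmemT' x hx).1
        have himg : T.image (fun x => if x = u then a else x) = insert a (T.erase u) := by
          conv_lhs => rw [hT]
          rw [Finset.image_insert]
          simp only [if_pos rfl]
          congr 1
          have h1 : (T.erase u).image (fun x => if x = u then a else x) = (T.erase u).image id :=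
            Finset.image_congr fun x hx =>
              if_neg (Finset.ne_of_mem_erase (Finset.mem_coe.mp hx))
          rw [h1, Finset.image_id]
        rw [himg]
        rw [show contrS Γ.faces v a u = _ from rfl]
        constructor
        · intro hmem
          simp only [contrS, Set.mem_union, Set.mem_sep_iff, Set.mem_setOf_eq] at hmem
          rcases hmem with ⟨hTΓ, _, _⟩ | ⟨T₀, hvT₀, haT₀, hor, hTeq⟩
          · exact absurd (Γ.subset_V T hTΓ huT) hu
          · have huT₀ : u ∉ T₀ := by
              intro hmem
              rcases hor with h1 | h1
              · exact hu (Γ.subset_V _ h1 (Finset.mem_insert_of_mem hmem))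
              · exact hu (Γ.subset_V _ h1 (Finset.mem_insert_of_mem hmem))
            have hT₀ : T₀ = T.erase u := by
              rw [hTeq, Finset.erase_insert huT₀]
            rw [hT₀] at hor
            exact (hmain (T.erase u) hsubΔ haT').mp hor
        · intro hD
          simp only [contrS, Set.mem_union, Set.mem_sep_iff, Set.mem_setOf_eq]
          right
          exact ⟨T.erase u, hvT', haT', (hmain (T.erase u) hsubΔ haT').mpr hD, hT⟩
      · -- case u ∉ T
        have hmemT : ∀ x ∈ T, x ∈ Δ.V ∧ x ≠ v ∧ x ≠ a := by
          intro x hx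
          rcases hTmem x hx with rfl | h2
          · exact absurd hx huT
          · exact h2
        have haT : a ∉ T := fun hmem => (hmemT a hmem).2.2 rfl
        have hvT : v ∉ T := fun hmem => (hmemT v hmem).2.1 rfl
        have himg : T.image (fun x => if x = u then a else x) = T := by
          have h1 : T.image (fun x => if x = u then a else x) = T.image id :=
            Finset.image_congr fun x hx =>
              if_neg (fun e : x = u => huT (e ▸ Finset.mem_coe.mp hx))
          rw [h1, Finset.image_id]
        rw [himg]
        constructor
        · intro hmem
          simp only [contrS, Set.mem_union, Set.mem_sep_iff, Set.mem_setOf_eq] at hmem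
          rcases hmem with ⟨hTΓ, _, _⟩ | ⟨T₀, _, _, _, hTeq⟩
          · exact ((hΓ1 T hvT).mp hTΓ).1
          · exact absurd (hTeq ▸ Finset.mem_insert_self u T₀) huT
        · intro hTΔ
          simp only [contrS, Set.mem_union, Set.mem_sep_iff, Set.mem_setOf_eq]
          left
          refine ⟨(hΓ1 T hvT).mpr ⟨hTΔ, fun hsub => haT (hsub (by simp)) ⟩, hvT, haT⟩
end

section
/- Let Δ be a finite simplicial complex on vertex set V and e = {a,b} an edge of Δ satisfying the link condition lk_Δ({a,b}) = lk_Δ({a}) ∩ lk_Δ({b}), and let Δ' = Δ/{a,b} be the contraction of e. Then f_0(Δ') = f_0(Δ) − 1 and f_1(Δ') = f_1(Δ) − f_0(lk_Δ(e)) − 1; consequently, for every integer d, f_1(Δ) − (2d−3)·f_0(Δ) + 2d(d−2) = [f_1(Δ') − (2d−3)·f_0(Δ') + 2d(d−2)] + [f_0(lk_Δ(e)) − 2(d−2)], i.e., γ_2(Δ) = γ_2(Δ') + γ_1(lk_Δ(e)) where γ_2 is computed with parameter d and γ_1 with parameter d−2. -/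
/-- `fnum K i` is the number `f_i` of faces of `K` of cardinality `i + 1`. -/
noncomputable def fnum {α : Type*} (K : Set (Finset α)) (i : ℕ) : ℕ :=
  {F ∈ K | F.card = i + 1}.ncard

lemma fnum_eq_card {α : Type*} (K : Set (Finset α)) (i : ℕ) (s : Finset (Finset α))
    (h : ∀ F, F ∈ s ↔ F ∈ K ∧ F.card = i + 1) : fnum K i = s.card := by
  have hs : {F ∈ K | F.card = i + 1} = ↑s := by
    ext F
    simp only [Set.mem_sep_iff, Finset.mem_coe, h]
  rw [fnum, hs, Set.ncard_coe_finset]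

/-- For an edge `e = {a,b}` of `Δ` satisfying the link condition, the
contraction `Δ' = Δ/e` satisfies `f₀(Δ') = f₀(Δ) - 1` and
`f₁(Δ') = f₁(Δ) - f₀(lk_Δ(e)) - 1`; consequently `γ₂(Δ) = γ₂(Δ') + γ₁(lk_Δ(e))`
for every parameter `d` (with `γ₁` computed with parameter `d - 2`). -/
theorem gamma_two_of_contraction {α : Type*} [DecidableEq α]
    (Δ : SC α) (a b : α) (hab : a ≠ b) (he : ({a, b} : Finset α) ∈ Δ.faces)
    (hlink : lkS Δ.faces {a, b} = lkS Δ.faces {a} ∩ lkS Δ.faces {b})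
    (v : α) (hv : v ∉ Δ.V)
    (Δ' : SC α) (hV' : Δ'.V = insert v (Δ.V \ {a, b}))
    (hfaces' : Δ'.faces = contrS Δ.faces a b v) :
    (fnum Δ'.faces 0 : ℤ) = (fnum Δ.faces 0 : ℤ) - 1 ∧
    (fnum Δ'.faces 1 : ℤ) =
      (fnum Δ.faces 1 : ℤ) - (fnum (lkS Δ.faces {a, b}) 0 : ℤ) - 1 ∧
    ∀ d : ℤ,
      (fnum Δ.faces 1 : ℤ) - (2 * d - 3) * (fnum Δ.faces 0 : ℤ) + 2 * d * (d - 2) =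
        ((fnum Δ'.faces 1 : ℤ) - (2 * d - 3) * (fnum Δ'.faces 0 : ℤ) + 2 * d * (d - 2))
        + ((fnum (lkS Δ.faces {a, b}) 0 : ℤ) - 2 * (d - 2)) := by
  classical
  have haV : a ∈ Δ.V := Δ.subset_V _ he (by simp)
  have hbV : b ∈ Δ.V := Δ.subset_V _ he (by simp)
  have hva : v ≠ a := fun h => hv (h ▸ haV)
  have hvb : v ≠ b := fun h => hv (h ▸ hbV)
  -- vertex counts
  have h0 : fnum Δ.faces 0 = Δ.V.card := by
    rw [fnum_eq_card Δ.faces 0 (Δ.V.image fun x => ({x} : Finset α))]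
    · exact Finset.card_image_of_injective _ Finset.singleton_injective
    · intro F
      simp only [Finset.mem_image]
      constructor
      · rintro ⟨x, hx, rfl⟩
        exact ⟨Δ.singleton_mem x hx, Finset.card_singleton x⟩
      · rintro ⟨hF, hc⟩
        obtain ⟨x, rfl⟩ := Finset.card_eq_one.mp hc
        exact ⟨x, Δ.subset_V _ hF (Finset.mem_singleton_self x), rfl⟩
  have h0' : fnum Δ'.faces 0 = Δ'.V.card := by
    rw [fnum_eq_card Δ'.faces 0 (Δ'.V.image fun x => ({x} : Finset α))]
    · exact Finset.card_image_of_injective _ Finset.singleton_injective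
    · intro F
      simp only [Finset.mem_image]
      constructor
      · rintro ⟨x, hx, rfl⟩
        exact ⟨Δ'.singleton_mem x hx, Finset.card_singleton x⟩
      · rintro ⟨hF, hc⟩
        obtain ⟨x, rfl⟩ := Finset.card_eq_one.mp hc
        exact ⟨x, Δ'.subset_V _ hF (Finset.mem_singleton_self x), rfl⟩
  have hVcard : Δ'.V.card + 1 = Δ.V.card := by
    have hsub : ({a, b} : Finset α) ⊆ Δ.V := Δ.subset_V _ he
    have hvnot : v ∉ Δ.V \ ({a, b} : Finset α) := fun h => hv (Finset.mem_sdiff.mp h).1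
    have h2 : ({a, b} : Finset α).card = 2 := Finset.card_pair hab
    have hle := Finset.card_le_card hsub
    have hsd := Finset.card_sdiff_of_subset hsub
    rw [hV', Finset.card_insert_of_notMem hvnot]
    omega
  -- the key vertex sets
  set Xa : Finset α := Δ.V.filter
    (fun x => x ≠ a ∧ x ≠ b ∧ ({a, x} : Finset α) ∈ Δ.faces) with hXa
  set Xb : Finset α := Δ.V.filter
    (fun x => x ≠ a ∧ x ≠ b ∧ ({b, x} : Finset α) ∈ Δ.faces) with hXb
  set E1 : Finset (Finset α) := Δ.V.powerset.filter
    (fun F => F ∈ Δ.faces ∧ F.card = 2 ∧ a ∉ F ∧ b ∉ F) with hE1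
  -- link vertex count
  have hL : fnum (lkS Δ.faces {a, b}) 0 = (Xa ∩ Xb).card := by
    rw [fnum_eq_card _ 0 ((Xa ∩ Xb).image fun x => ({x} : Finset α))]
    · exact Finset.card_image_of_injective _ Finset.singleton_injective
    · intro F
      simp only [Finset.mem_image, Finset.mem_inter, hXa, hXb, Finset.mem_filter]
      constructor
      · rintro ⟨x, ⟨⟨hxV, hxa, hxb, hax⟩, ⟨-, -, -, hbx⟩⟩, rfl⟩
        refine ⟨?_, Finset.card_singleton x⟩
        rw [hlink]
        constructor
        · refine ⟨Finset.singleton_nonempty x, ?_, ?_⟩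
          · ext y; simp; rintro rfl; exact hxa
          · have : ({x} : Finset α) ∪ {a} = {a, x} := by
              ext y; simp [or_comm]
            rw [this]; exact hax
        · refine ⟨Finset.singleton_nonempty x, ?_, ?_⟩
          · ext y; simp; rintro rfl; exact hxb
          · have : ({x} : Finset α) ∪ {b} = {b, x} := by
              ext y; simp [or_comm]
            rw [this]; exact hbx
      · rintro ⟨hmem, hc⟩
        obtain ⟨x, rfl⟩ := Finset.card_eq_one.mp hc
        rw [hlink] at hmem
        obtain ⟨⟨-, hia, hma⟩, ⟨-, hib, hmb⟩⟩ := hmem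
        have hxa : x ≠ a := by
          intro h; subst h
          have : x ∈ ({x} : Finset α) ∩ {x} := by simp
          rw [hia] at this; simp at this
        have hxb : x ≠ b := by
          intro h; subst h
          have : x ∈ ({x} : Finset α) ∩ {x} := by simp
          rw [hib] at this; simp at this
        have hea : ({x} : Finset α) ∪ {a} = {a, x} := by ext y; simp [or_comm]
        have heb : ({x} : Finset α) ∪ {b} = {b, x} := by ext y; simp [or_comm]
        rw [hea] at hma; rw [heb] at hmb
        have hxV : x ∈ Δ.V := Δ.subset_V _ hma (by simp)
        exact ⟨x, ⟨⟨hxV, hxa, hxb, hma⟩, hxV, hxa, hxb, hmb⟩, rfl⟩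
  -- edge count of Δ
  have h1 : fnum Δ.faces 1 =
      E1.card + Xa.card + Xb.card + 1 := by
    have hInjA : Set.InjOn (fun x => ({a, x} : Finset α)) ↑Xa := by
      intro x hx y hy hxy
      simp only [hXa, Finset.coe_filter, Set.mem_setOf_eq] at hx hy
      have hxy2 : ({a, x} : Finset α) = {a, y} := hxy
      have : x ∈ ({a, y} : Finset α) := by rw [← hxy2]; simp
      simp at this; tauto
    have hInjB : Set.InjOn (fun x => ({b, x} : Finset α)) ↑Xb := by
      intro x hx y hy hxy
      simp only [hXb, Finset.coe_filter, Set.mem_setOf_eq] at hx hy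
      have hxy2 : ({b, x} : Finset α) = {b, y} := hxy
      have : x ∈ ({b, y} : Finset α) := by rw [← hxy2]; simp
      simp at this; tauto
    rw [fnum_eq_card _ 1
      (E1 ∪ Xa.image (fun x => ({a, x} : Finset α))
          ∪ Xb.image (fun x => ({b, x} : Finset α)) ∪ {({a, b} : Finset α)})]
    · have d1 : Disjoint E1 (Xa.image (fun x => ({a, x} : Finset α))) := by
        rw [Finset.disjoint_left]
        rintro F hF hF2
        simp only [Finset.mem_image] at hF2
        obtain ⟨x, -, rfl⟩ := hF2
        simp only [hE1, Finset.mem_filter] at hF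
        exact hF.2.2.2.1 (by simp)
      have d2 : Disjoint (E1 ∪ Xa.image (fun x => ({a, x} : Finset α)))
          (Xb.image (fun x => ({b, x} : Finset α))) := by
        rw [Finset.disjoint_left]
        rintro F hF hF2
        simp only [Finset.mem_image] at hF2
        obtain ⟨x, hx, rfl⟩ := hF2
        simp only [hXb, Finset.mem_filter] at hx
        rcases Finset.mem_union.mp hF with h | h
        · simp only [hE1, Finset.mem_filter] at h
          exact h.2.2.2.2 (by simp)
        · simp only [Finset.mem_image] at h
          obtain ⟨y, hy, hxy⟩ := h
          simp only [hXa, Finset.mem_filter] at hy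
          have : a ∈ ({b, x} : Finset α) := by rw [← hxy]; simp
          simp at this
          rcases this with h | h
          · exact hab h
          · exact hx.2.1 h.symm
      have d3 : Disjoint (E1 ∪ Xa.image (fun x => ({a, x} : Finset α))
          ∪ Xb.image (fun x => ({b, x} : Finset α))) {({a, b} : Finset α)} := by
        rw [Finset.disjoint_right]
        intro F hF hF2
        simp only [Finset.mem_singleton] at hF
        subst hF
        rcases Finset.mem_union.mp hF2 with h | h
        · rcases Finset.mem_union.mp h with h | h
          · simp only [hE1, Finset.mem_filter] at h
            exact h.2.2.2.1 (by simp)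
          · simp only [Finset.mem_image] at h
            obtain ⟨x, hx, hxe⟩ := h
            simp only [hXa, Finset.mem_filter] at hx
            have : b ∈ ({a, x} : Finset α) := by rw [hxe]; simp
            simp at this
            rcases this with h | h
            · exact hab h.symm
            · exact hx.2.2.1 h.symm
        · simp only [Finset.mem_image] at h
          obtain ⟨x, hx, hxe⟩ := h
          simp only [hXb, Finset.mem_filter] at hx
          have : a ∈ ({b, x} : Finset α) := by rw [hxe]; simp
          simp at this
          rcases this with h | h
          · exact hab h
          · exact hx.2.1 h.symm
      rw [Finset.card_union_of_disjoint d3, Finset.card_union_of_disjoint d2,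
        Finset.card_union_of_disjoint d1, Finset.card_image_of_injOn hInjA,
        Finset.card_image_of_injOn hInjB, Finset.card_singleton]
    · intro F
      simp only [Finset.mem_union, Finset.mem_image, Finset.mem_singleton]
      constructor
      · rintro (((h | ⟨x, hx, rfl⟩) | ⟨x, hx, rfl⟩) | rfl)
        · simp only [hE1, Finset.mem_filter] at h
          exact ⟨h.2.1, h.2.2.1⟩
        · simp only [hXa, Finset.mem_filter] at hx
          exact ⟨hx.2.2.2, Finset.card_pair (Ne.symm hx.2.1)⟩
        · simp only [hXb, Finset.mem_filter] at hx
          exact ⟨hx.2.2.2, Finset.card_pair (Ne.symm hx.2.2.1)⟩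
        · exact ⟨he, Finset.card_pair hab⟩
      · rintro ⟨hF, hc⟩
        by_cases hba : b ∈ F
        · by_cases haa : a ∈ F
          · right
            have hsub : ({a, b} : Finset α) ⊆ F := by
              intro y hy; simp at hy; rcases hy with rfl | rfl <;> assumption
            exact (Finset.eq_of_subset_of_card_le hsub
              (by rw [hc, Finset.card_pair hab])).symm
          · left; right
            have : (F.erase b).card = 1 := by
              rw [Finset.card_erase_of_mem hba, hc]
            obtain ⟨x, hx⟩ := Finset.card_eq_one.mp this
            have hxF : x ∈ F := Finset.mem_of_mem_erase (hx ▸ Finset.mem_singleton_self x)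
            have hxb : x ≠ b := Finset.ne_of_mem_erase (hx ▸ Finset.mem_singleton_self x)
            have hFe : F = {b, x} := by
              rw [← Finset.insert_erase hba, hx]
            refine ⟨x, ?_, hFe.symm⟩
            simp only [hXb, Finset.mem_filter]
            refine ⟨Δ.subset_V _ hF hxF, ?_, hxb, hFe ▸ hF⟩
            rintro rfl; exact haa hxF
        · by_cases haa : a ∈ F
          · left; left; right
            have : (F.erase a).card = 1 := by
              rw [Finset.card_erase_of_mem haa, hc]
            obtain ⟨x, hx⟩ := Finset.card_eq_one.mp this
            have hxF : x ∈ F := Finset.mem_of_mem_erase (hx ▸ Finset.mem_singleton_self x)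
            have hxa : x ≠ a := Finset.ne_of_mem_erase (hx ▸ Finset.mem_singleton_self x)
            have hFe : F = {a, x} := by
              rw [← Finset.insert_erase haa, hx]
            refine ⟨x, ?_, hFe.symm⟩
            simp only [hXa, Finset.mem_filter]
            refine ⟨Δ.subset_V _ hF hxF, hxa, ?_, hFe ▸ hF⟩
            rintro rfl; exact hba hxF
          · left; left; left
            simp only [hE1, Finset.mem_filter, Finset.mem_powerset]
            exact ⟨Δ.subset_V _ hF, hF, hc, haa, hba⟩
  -- edge count of Δ'
  have h1' : fnum Δ'.faces 1 = E1.card + (Xa ∪ Xb).card := by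
    have hInjV : Set.InjOn (fun x => ({v, x} : Finset α)) ↑(Xa ∪ Xb) := by
      intro x hx y hy hxy
      simp only [Finset.coe_union, Set.mem_union, hXa, hXb, Finset.coe_filter,
        Set.mem_setOf_eq] at hx hy
      have hxv : x ≠ v := by rintro rfl; rcases hx with h | h <;> exact hv h.1
      have hxy2 : ({v, x} : Finset α) = {v, y} := hxy
      have : x ∈ ({v, y} : Finset α) := by rw [← hxy2]; simp
      simp at this
      rcases this with h | h
      · exact absurd h hxv
      · exact h
    rw [fnum_eq_card _ 1 (E1 ∪ (Xa ∪ Xb).image (fun x => ({v, x} : Finset α)))]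
    · have d : Disjoint E1 ((Xa ∪ Xb).image (fun x => ({v, x} : Finset α))) := by
        rw [Finset.disjoint_left]
        rintro F hF hF2
        simp only [Finset.mem_image] at hF2
        obtain ⟨x, -, rfl⟩ := hF2
        simp only [hE1, Finset.mem_filter, Finset.mem_powerset] at hF
        exact hv (hF.1 (by simp))
      rw [Finset.card_union_of_disjoint d, Finset.card_image_of_injOn hInjV]
    · intro F
      simp only [Finset.mem_union, Finset.mem_image]
      constructor
      · rintro (h | ⟨x, hx, rfl⟩)
        · simp only [hE1, Finset.mem_filter] at h
          refine ⟨?_, h.2.2.1⟩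
          rw [hfaces']
          exact Or.inl ⟨h.2.1, h.2.2.2.1, h.2.2.2.2⟩
        · simp only [Finset.mem_union, hXa, hXb, Finset.mem_filter] at hx
          have hxV : x ∈ Δ.V := by rcases hx with h | h <;> exact h.1
          have hxa : x ≠ a := by rcases hx with h | h <;> exact h.2.1
          have hxb : x ≠ b := by rcases hx with h | h <;> exact h.2.2.1
          have hxv : x ≠ v := by rintro rfl; exact hv hxV
          constructor
          · rw [hfaces']
            refine Or.inr ⟨{x}, by simp [Ne.symm hxa], by simp [Ne.symm hxb], ?_, rfl⟩
            rcases hx with h | h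
            · left
              have : insert a ({x} : Finset α) = {a, x} := rfl
              rw [this]; exact h.2.2.2
            · right
              have : insert b ({x} : Finset α) = {b, x} := rfl
              rw [this]; exact h.2.2.2
          · exact Finset.card_pair (Ne.symm hxv)
      · rintro ⟨hF, hc⟩
        rw [hfaces'] at hF
        rcases hF with ⟨hFf, haF, hbF⟩ | ⟨T, haT, hbT, hT, rfl⟩
        · left
          simp only [hE1, Finset.mem_filter, Finset.mem_powerset]
          exact ⟨Δ.subset_V _ hFf, hFf, hc, haF, hbF⟩
        · right
          have hTV : T ⊆ Δ.V := by
            rcases hT with h | h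
            · exact (Finset.subset_insert _ _).trans (Δ.subset_V _ h)
            · exact (Finset.subset_insert _ _).trans (Δ.subset_V _ h)
          have hvT : v ∉ T := fun h => hv (hTV h)
          have : T.card = 1 := by
            rw [Finset.card_insert_of_notMem hvT] at hc; omega
          obtain ⟨x, rfl⟩ := Finset.card_eq_one.mp this
          refine ⟨x, ?_, rfl⟩
          simp only [Finset.mem_union, hXa, hXb, Finset.mem_filter]
          have hxV : x ∈ Δ.V := hTV (Finset.mem_singleton_self x)
          have hxa : x ≠ a := fun h => haT (h ▸ Finset.mem_singleton_self x)
          have hxb : x ≠ b := fun h => hbT (h ▸ Finset.mem_singleton_self x)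
          rcases hT with h | h
          · left
            have he' : insert a ({x} : Finset α) = {a, x} := rfl
            exact ⟨hxV, hxa, hxb, he' ▸ h⟩
          · right
            have he' : insert b ({x} : Finset α) = {b, x} := rfl
            exact ⟨hxV, hxa, hxb, he' ▸ h⟩
  have hUI : (Xa ∪ Xb).card + (Xa ∩ Xb).card = Xa.card + Xb.card :=
    Finset.card_union_add_card_inter Xa Xb
  have g0 : (fnum Δ'.faces 0 : ℤ) = (fnum Δ.faces 0 : ℤ) - 1 := by
    rw [h0, h0']; omega
  have g1 : (fnum Δ'.faces 1 : ℤ) =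
      (fnum Δ.faces 1 : ℤ) - (fnum (lkS Δ.faces {a, b}) 0 : ℤ) - 1 := by
    rw [h1, h1', hL]; push_cast; omega
  refine ⟨g0, g1, fun d => ?_⟩
  rw [g0, g1]; ring
end
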